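/- Let K ⊂ R^d be a convex body in γ-canonical form and let C be a cap of K of volume V with ε^{(d+1)/2}·2^j ≤ V < ε^{(d+1)/2}·2^{j+1} (i.e., C is of type j), where C has width ε. Let a_j = max(j²,1) and C' = C^{1/a_j} (the cap with the same apex and base at distance ε/a_j from the supporting hyperplane). Then, letting k be the type of C', we have j + 1 > k > j − d·log₂(a_j) − 1, and consequently a_j = Θ(a_k), so C' has width ε/a_j = Θ(ε/a_k). -/

import Mathlib

open MeasureTheory Metric
open scoped RealInnerProductSpace Pointwise

/-- Let `K` be in `γ`-canonical form and `C` an `ε`-width cap of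
`K` of type `j` (i.e. `ε^{(d+1)/2}·2^j ≤ vol(C) < ε^{(d+1)/2}·2^{j+1}`). With
`a_j = max(j², 1)`, let `C' = C^{1/a_j}` be the cap with the same apex whose
base is at distance `ε/a_j` from the supporting hyperplane, and let `k` be the
type of `C'`. Then `j + 1 > k > j − d·log₂(a_j) − 1`. -/
theorem stmt19 {d : ℕ} (γ : ℝ) (hγ0 : 0 < γ) (hγ1 : γ ≤ 1)
    (K : Set (EuclideanSpace ℝ (Fin d)))
    (hKconv : Convex ℝ K) (hKcomp : IsCompact K) (hKint : (interior K).Nonempty)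
    (hKcan₁ : closedBall (0 : EuclideanSpace ℝ (Fin d)) (Real.sqrt γ) ⊆ K)
    (hKcan₂ : K ⊆ closedBall (0 : EuclideanSpace ℝ (Fin d)) (1 / Real.sqrt γ))
    (ε : ℝ) (hε : 0 < ε) (hε1 : ε < 1)
    (u : EuclideanSpace ℝ (Fin d)) (hu : ‖u‖ = 1)
    (m : ℝ) (hm : m = sSup ((fun y => ⟪u, y⟫) '' K))
    (j k : ℤ) (a : ℝ) (ha : a = max ((j : ℝ) ^ 2) 1)
    -- C = the ε-width cap orthogonal to u has type j
    (htypej : ε ^ (((d : ℝ) + 1) / 2) * (2 : ℝ) ^ j ≤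
        (volume {y ∈ K | m - ε ≤ ⟪u, y⟫}).toReal ∧
      (volume {y ∈ K | m - ε ≤ ⟪u, y⟫}).toReal <
        ε ^ (((d : ℝ) + 1) / 2) * (2 : ℝ) ^ (j + 1))
    -- C' = C^{1/a_j}, cut at distance ε/a_j from the supporting hyperplane, has type k
    (htypek : ε ^ (((d : ℝ) + 1) / 2) * (2 : ℝ) ^ k ≤
        (volume {y ∈ K | m - ε / a ≤ ⟪u, y⟫}).toReal ∧
      (volume {y ∈ K | m - ε / a ≤ ⟪u, y⟫}).toReal <
        ε ^ (((d : ℝ) + 1) / 2) * (2 : ℝ) ^ (k + 1)) :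
    (j : ℝ) + 1 > (k : ℝ) ∧ (k : ℝ) > (j : ℝ) - d * Real.logb 2 a - 1 := by

  have ha1 : (1:ℝ) ≤ a := ha ▸ le_max_right _ _
  have ha0 : (0:ℝ) < a := lt_of_lt_of_le one_pos ha1
  set C : Set (EuclideanSpace ℝ (Fin d)) := {y ∈ K | m - ε ≤ ⟪u, y⟫} with hC
  set C' : Set (EuclideanSpace ℝ (Fin d)) := {y ∈ K | m - ε / a ≤ ⟪u, y⟫} with hC'
  have hεp0 : 0 < ε ^ (((d : ℝ) + 1) / 2) := Real.rpow_pos_of_pos hε _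
  have hsub : C' ⊆ C := by
    intro y hy
    exact ⟨hy.1, le_trans (sub_le_sub_left (div_le_self hε.le ha1) m) hy.2⟩
  have hCK : C ⊆ K := fun y hy => hy.1
  have hfin : volume C ≠ ⊤ :=
    (lt_of_le_of_lt (measure_mono hCK) hKcomp.measure_lt_top).ne
  have hfin' : volume C' ≠ ⊤ :=
    (lt_of_le_of_lt (measure_mono (hsub.trans hCK)) hKcomp.measure_lt_top).ne
  -- upper bound : k < j + 1
  have hmono : (volume C').toReal ≤ (volume C).toReal :=
    ENNReal.toReal_mono hfin (measure_mono hsub)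
  have hk_lt : k < j + 1 := by
    have h2 : (2:ℝ) ^ k < (2:ℝ) ^ (j + 1) := by
      have := lt_of_le_of_lt (le_trans htypek.1 hmono) htypej.2
      exact lt_of_mul_lt_mul_left (by linarith [mul_comm ((2:ℝ)^k) (ε ^ (((d : ℝ) + 1) / 2)), mul_comm ((2:ℝ)^(j+1)) (ε ^ (((d : ℝ) + 1) / 2))]) hεp0.le
    exact_mod_cast (zpow_lt_zpow_iff_right₀ (by norm_num : (1:ℝ) < 2)).mp h2
  -- find the apex p
  obtain ⟨p, hpK, hpm⟩ : ∃ p ∈ K, ⟪u, p⟫ = m := by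
    have hKne : K.Nonempty := hKint.mono interior_subset
    have hc : IsCompact ((fun y => ⟪u, y⟫) '' K) :=
      hKcomp.image (continuous_const.inner continuous_id)
    have hmem := hc.sSup_mem (hKne.image _)
    rw [← hm] at hmem
    obtain ⟨p, hp, hpe⟩ := hmem
    exact ⟨p, hp, hpe⟩
  -- inclusion of shrunk cap
  have hainv0 : (0:ℝ) < a⁻¹ := inv_pos.mpr ha0
  have hainv1 : a⁻¹ ≤ 1 := inv_le_one_of_one_le₀ ha1
  have hincl : ((p - a⁻¹ • p) +ᵥ (a⁻¹ • C) : Set (EuclideanSpace ℝ (Fin d))) ⊆ C' := by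
    rintro x hx
    obtain ⟨z, hz, rfl⟩ := hx
    obtain ⟨y, hy, rfl⟩ := hz
    show (p - a⁻¹ • p) + a⁻¹ • y ∈ C'
    constructor
    · have heq : (p - a⁻¹ • p) + a⁻¹ • y = (1 - a⁻¹) • p + a⁻¹ • y := by
        simp [sub_smul, one_smul]
      rw [heq]
      exact hKconv hpK hy.1 (by linarith) hainv0.le (by ring)
    · have hiy : m - ε ≤ ⟪u, y⟫ := hy.2
      have hcalc : ⟪u, (p - a⁻¹ • p) + a⁻¹ • y⟫ = m - a⁻¹ * m + a⁻¹ * ⟪u, y⟫ := by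
        rw [inner_add_right, inner_sub_right, inner_smul_right,
          inner_smul_right, hpm]
      rw [hcalc, div_eq_inv_mul]
      nlinarith
  -- volume scaling
  have hvol : volume ((p - a⁻¹ • p) +ᵥ (a⁻¹ • C) : Set (EuclideanSpace ℝ (Fin d))) =
      ENNReal.ofReal (|a⁻¹| ^ d) * volume C := by
    rw [measure_vadd, Measure.addHaar_smul]
    simp [abs_inv, abs_pow, inv_pow]
  have hscale : a⁻¹ ^ d * (volume C).toReal ≤ (volume C').toReal := by
    have h1 : ENNReal.ofReal (|a⁻¹| ^ d) * volume C ≤ volume C' := by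
      rw [← hvol]; exact measure_mono hincl
    have h2 := ENNReal.toReal_mono hfin' h1
    rw [ENNReal.toReal_mul, ENNReal.toReal_ofReal (by positivity)] at h2
    rw [abs_of_pos hainv0] at h2
    exact h2
  -- lower bound : j < d * logb 2 a + k + 1
  have hpow : (2:ℝ) ^ j < a ^ d * (2:ℝ) ^ (k + 1) := by
    have hA : ε ^ (((d : ℝ) + 1) / 2) * (2:ℝ) ^ j ≤ (volume C).toReal := htypej.1
    have hB : (volume C').toReal < ε ^ (((d : ℝ) + 1) / 2) * (2:ℝ) ^ (k + 1) := htypek.2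
    have had : (0:ℝ) < a ^ d := pow_pos ha0 d
    have hinvd : a⁻¹ ^ d = (a ^ d)⁻¹ := by rw [inv_pow]
    have hchain : (a ^ d)⁻¹ * (ε ^ (((d : ℝ) + 1) / 2) * (2:ℝ) ^ j) <
        ε ^ (((d : ℝ) + 1) / 2) * (2:ℝ) ^ (k + 1) := by
      calc (a ^ d)⁻¹ * (ε ^ (((d : ℝ) + 1) / 2) * (2:ℝ) ^ j)
          ≤ (a ^ d)⁻¹ * (volume C).toReal := by
            apply mul_le_mul_of_nonneg_left hA (by positivity)
        _ = a⁻¹ ^ d * (volume C).toReal := by rw [hinvd]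
        _ ≤ (volume C').toReal := hscale
        _ < _ := hB
    have := (inv_mul_lt_iff₀ had).mp hchain
    have h2pos : (0:ℝ) < (2:ℝ) ^ (k+1) := zpow_pos (by norm_num) _
    nlinarith [zpow_pos (show (0:ℝ) < 2 by norm_num) j]
  have hl2 : (0:ℝ) < Real.log 2 := Real.log_pos (by norm_num)
  have h1 : Real.log ((2:ℝ) ^ j) < Real.log (a ^ d * (2:ℝ) ^ (k + 1)) :=
    Real.log_lt_log (zpow_pos (by norm_num) j) hpow
  rw [Real.log_mul (by positivity) (by positivity), Real.log_pow,
    Real.log_zpow, Real.log_zpow] at h1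
  push_cast at h1
  have key : ((j:ℝ) - (k + 1)) * Real.log 2 < (d:ℝ) * Real.log a := by nlinarith
  have key2 : ((j:ℝ) - (k + 1)) < ((d:ℝ) * Real.log a) / Real.log 2 :=
    (lt_div_iff₀ hl2).mpr key
  constructor
  · exact_mod_cast (by exact_mod_cast hk_lt : (k:ℝ) < j + 1)
  · have : Real.logb 2 a = Real.log a / Real.log 2 := rfl
    rw [this]
    have : (d:ℝ) * (Real.log a / Real.log 2) = ((d:ℝ) * Real.log a) / Real.log 2 := by ring
    linarith [this ▸ key2]
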